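/- Let G be the disjoint union of graphs G_1 on n_1 vertices and G_2 on n_2 vertices. The minimum number of fill edges in a co-bipartite completion of G such that one clique has exactly j vertices equals the minimum over k of [c_1(k) + c_2(j−k) + k(j−k) + (n_1−k)(n_2−j+k)], where c_i(t) denotes the minimum number of fill edges in a co-bipartite completion of G_i with one clique of size exactly t, and k ranges over max(0, j−n_2) ≤ k ≤ min(j, n_1). -/

import Mathlib

def IsCoBipartite {V : Type*} (G : SimpleGraph V) : Prop :=
  ∃ s : Set V, G.IsClique s ∧ G.IsClique sᶜ

/-- The minimum number of fill edges in a co-bipartite completion of `G` in which the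
first clique of the partition has exactly `t` vertices. -/
noncomputable def cobipCompletionNumberWith {V : Type*} [Fintype V]
    (G : SimpleGraph V) (t : ℕ) : ℕ :=
  sInf {m | ∃ (H : SimpleGraph V) (s : Set V), G ≤ H ∧ H.IsClique s ∧ H.IsClique sᶜ ∧
    s.ncard = t ∧ (H.edgeSet \ G.edgeSet).ncard = m}

namespace CobipAux

open Set SimpleGraph

lemma ncard_prod {α β : Type*} (s : Set α) (t : Set β) :
    (s ×ˢ t).ncard = s.ncard * t.ncard := by
  rw [← Nat.card_coe_set_eq, ← Nat.card_coe_set_eq, ← Nat.card_coe_set_eq,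
    ← Nat.card_prod]
  exact Nat.card_congr (Equiv.Set.prod s t)

variable {V1 V2 : Type*}

lemma ncard_inl_union_inr [Fintype V1] [Fintype V2] (A : Set V1) (B : Set V2) :
    (Sum.inl '' A ∪ Sum.inr '' B : Set (V1 ⊕ V2)).ncard = A.ncard + B.ncard := by
  rw [Set.ncard_union_eq ?_ (Set.toFinite _) (Set.toFinite _),
    Set.ncard_image_of_injective _ Sum.inl_injective,
    Set.ncard_image_of_injective _ Sum.inr_injective]
  rw [Set.disjoint_left]
  rintro x ⟨a, -, rfl⟩ ⟨b, -, h⟩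
  exact Sum.inl_ne_inr h.symm

lemma ncard_crossSet [Fintype V1] [Fintype V2] (s1 : Set V1) (s2 : Set V2) :
    (s1 ×ˢ s2 ∪ s1ᶜ ×ˢ s2ᶜ : Set (V1 × V2)).ncard
      = s1.ncard * s2.ncard + s1ᶜ.ncard * s2ᶜ.ncard := by
  rw [Set.ncard_union_eq ?_ (Set.toFinite _) (Set.toFinite _), ncard_prod, ncard_prod]
  rw [Set.disjoint_left]
  rintro ⟨a, b⟩ ⟨ha, -⟩ ⟨ha', -⟩
  exact ha' ha

lemma ncard_compl_eq [Fintype V1] (s : Set V1) :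
    sᶜ.ncard = Fintype.card V1 - s.ncard := by
  have := Set.ncard_add_ncard_compl s (Set.toFinite _) (Set.toFinite _)
  rw [Nat.card_eq_fintype_card] at this
  omega

/-- membership helpers -/
lemma mem_map_inl_iff {A : Set (Sym2 V1)} {u v : V1} :
    s(Sum.inl u, Sum.inl v) ∈ (Sym2.map (Sum.inl : V1 → V1 ⊕ V2) '' A) ↔ s(u, v) ∈ A := by
  constructor
  · rintro ⟨e, he, heq⟩
    have : e = s(u, v) := by
      apply Sym2.map.injective (Sum.inl_injective (β := V2))
      simpa using heq
    rwa [this] at he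
  · intro h
    exact ⟨s(u, v), h, by simp⟩

lemma mem_map_inr_iff {A : Set (Sym2 V2)} {u v : V2} :
    s(Sum.inr u, Sum.inr v) ∈ (Sym2.map (Sum.inr : V2 → V1 ⊕ V2) '' A) ↔ s(u, v) ∈ A := by
  constructor
  · rintro ⟨e, he, heq⟩
    have : e = s(u, v) := by
      apply Sym2.map.injective (Sum.inr_injective (α := V1))
      simpa using heq
    rwa [this] at he
  · intro h
    exact ⟨s(u, v), h, by simp⟩

lemma not_mem_map_inl_of_inr {A : Set (Sym2 V1)} {u : V1 ⊕ V2} {v : V2} :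
    s(u, Sum.inr v) ∉ (Sym2.map (Sum.inl : V1 → V1 ⊕ V2) '' A) := by
  rintro ⟨e, -, heq⟩
  induction e using Sym2.ind with
  | _ a b => simp [Sym2.eq_iff] at heq
lemma not_mem_map_inr_of_inl {A : Set (Sym2 V2)} {u : V1 ⊕ V2} {v : V1} :
    s(u, Sum.inl v) ∉ (Sym2.map (Sum.inr : V2 → V1 ⊕ V2) '' A) := by
  rintro ⟨e, -, heq⟩
  induction e using Sym2.ind with
  | _ a b => simp [Sym2.eq_iff] at heq

lemma not_mem_map_inr_of_inl' {A : Set (Sym2 V2)} {u : V1} {v : V1 ⊕ V2} :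
    s(Sum.inl u, v) ∉ (Sym2.map (Sum.inr : V2 → V1 ⊕ V2) '' A) := by
  rintro ⟨e, -, heq⟩
  induction e using Sym2.ind with
  | _ a b => simp [Sym2.eq_iff] at heq

def eX : V1 × V2 → Sym2 (V1 ⊕ V2) := fun p => s(Sum.inl p.1, Sum.inr p.2)

lemma eX_injective : Function.Injective (eX : V1 × V2 → Sym2 (V1 ⊕ V2)) := by
  rintro ⟨a, b⟩ ⟨c, d⟩ h
  simp only [eX, Sym2.eq_iff] at h
  rcases h with ⟨h1, h2⟩ | ⟨h1, h2⟩
  · simp_all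
  · exact absurd h1 (Sum.inl_ne_inr)

lemma mem_eX_iff {X : Set (V1 × V2)} {u : V1} {v : V2} :
    s(Sum.inl u, Sum.inr v) ∈ eX '' X ↔ (u, v) ∈ X := by
  constructor
  · rintro ⟨⟨a, b⟩, h, heq⟩
    have : ((a : V1), (b : V2)) = (u, v) := by
      apply eX_injective; simpa [eX] using heq
    rwa [this] at h
  · intro h; exact ⟨(u, v), h, rfl⟩

lemma not_mem_eX_ll {X : Set (V1 × V2)} {u v : V1} :
    s(Sum.inl u, Sum.inl v) ∉ eX '' X := by
  rintro ⟨⟨a, b⟩, -, heq⟩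
  simp [eX, Sym2.eq_iff] at heq
lemma not_mem_eX_rr {X : Set (V1 × V2)} {u v : V2} :
    s(Sum.inr u, Sum.inr v) ∉ eX '' X := by
  rintro ⟨⟨a, b⟩, -, heq⟩
  simp [eX, Sym2.eq_iff] at heq

lemma sum_adj_ll (G1 : SimpleGraph V1) (G2 : SimpleGraph V2) (a b : V1) :
    (G1 ⊕g G2).Adj (Sum.inl a) (Sum.inl b) ↔ G1.Adj a b := by simp
lemma sum_adj_rr (G1 : SimpleGraph V1) (G2 : SimpleGraph V2) (a b : V2) :
    (G1 ⊕g G2).Adj (Sum.inr a) (Sum.inr b) ↔ G2.Adj a b := by simp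
lemma sum_adj_lr (G1 : SimpleGraph V1) (G2 : SimpleGraph V2) (a : V1) (b : V2) :
    ¬ (G1 ⊕g G2).Adj (Sum.inl a) (Sum.inr b) := by simp

/-- Decomposition of the fill edge count for a supergraph of a disjoint union. -/
lemma fill_decomp [Fintype V1] [Fintype V2] (G1 : SimpleGraph V1) (G2 : SimpleGraph V2)
    (H : SimpleGraph (V1 ⊕ V2)) :
    (H.edgeSet \ (G1 ⊕g G2).edgeSet).ncard =
      ((H.comap Sum.inl).edgeSet \ G1.edgeSet).ncard
      + ((H.comap Sum.inr).edgeSet \ G2.edgeSet).ncard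
      + {p : V1 × V2 | H.Adj (Sum.inl p.1) (Sum.inr p.2)}.ncard := by
  classical
  set AL := Sym2.map (Sum.inl : V1 → V1 ⊕ V2) '' ((H.comap Sum.inl).edgeSet \ G1.edgeSet)
  set AR := Sym2.map (Sum.inr : V2 → V1 ⊕ V2) '' ((H.comap Sum.inr).edgeSet \ G2.edgeSet)
  set AX := eX '' {p : V1 × V2 | H.Adj (Sum.inl p.1) (Sum.inr p.2)}
  have hF : H.edgeSet \ (G1 ⊕g G2).edgeSet = AL ∪ AR ∪ AX := by
    ext e
    induction e using Sym2.ind with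
    | _ u v =>
      rcases u with a | a <;> rcases v with b | b
      · simp only [Set.mem_diff, mem_edgeSet, sum_adj_ll]
        constructor
        · rintro ⟨h1, h2⟩
          exact Or.inl (Or.inl (mem_map_inl_iff.mpr
            (by simp only [Set.mem_diff, mem_edgeSet, comap_adj]; exact ⟨h1, h2⟩)))
        · rintro ((h | h) | h)
          · have h' := mem_map_inl_iff.mp h
            simpa only [Set.mem_diff, mem_edgeSet, comap_adj] using h'
          · exact absurd h not_mem_map_inr_of_inl
          · exact absurd h not_mem_eX_ll
      · simp only [Set.mem_diff, mem_edgeSet]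
        constructor
        · rintro ⟨h1, -⟩
          exact Or.inr (mem_eX_iff.mpr h1)
        · rintro ((h | h) | h)
          · exact absurd h not_mem_map_inl_of_inr
          · exact absurd h not_mem_map_inr_of_inl'
          · exact ⟨mem_eX_iff.mp h, sum_adj_lr _ _ _ _⟩
      · rw [Sym2.eq_swap]
        simp only [Set.mem_diff, mem_edgeSet]
        constructor
        · rintro ⟨h1, -⟩
          exact Or.inr (mem_eX_iff.mpr h1)
        · rintro ((h | h) | h)
          · exact absurd h not_mem_map_inl_of_inr
          · exact absurd h not_mem_map_inr_of_inl'
          · exact ⟨mem_eX_iff.mp h, sum_adj_lr _ _ _ _⟩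
      · simp only [Set.mem_diff, mem_edgeSet, sum_adj_rr]
        constructor
        · rintro ⟨h1, h2⟩
          exact Or.inl (Or.inr (mem_map_inr_iff.mpr
            (by simp only [Set.mem_diff, mem_edgeSet, comap_adj]; exact ⟨h1, h2⟩)))
        · rintro ((h | h) | h)
          · exact absurd h not_mem_map_inl_of_inr
          · have h' := mem_map_inr_iff.mp h
            simpa only [Set.mem_diff, mem_edgeSet, comap_adj] using h'
          · exact absurd h not_mem_eX_rr
  have hdLR : Disjoint AL AR := by
    rw [Set.disjoint_left]
    rintro e ⟨e1, -, rfl⟩ h2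
    induction e1 using Sym2.ind with
    | _ a b => rw [Sym2.map_pair_eq, Sym2.eq_swap] at h2; exact not_mem_map_inr_of_inl h2
  have hdLX : Disjoint (AL ∪ AR) AX := by
    rw [Set.disjoint_left]
    rintro e (⟨e1, -, rfl⟩ | ⟨e1, -, rfl⟩) h2 <;>
      induction e1 using Sym2.ind with
      | _ a b => ?_
    · rw [Sym2.map_pair_eq] at h2; exact not_mem_eX_ll h2
    · rw [Sym2.map_pair_eq] at h2; exact not_mem_eX_rr h2
  rw [hF, Set.ncard_union_eq hdLX (Set.toFinite _) (Set.toFinite _),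
    Set.ncard_union_eq hdLR (Set.toFinite _) (Set.toFinite _),
    Set.ncard_image_of_injective _ (Sym2.map.injective Sum.inl_injective),
    Set.ncard_image_of_injective _ (Sym2.map.injective Sum.inr_injective),
    Set.ncard_image_of_injective _ eX_injective]

section Glue

variable (H1 : SimpleGraph V1) (H2 : SimpleGraph V2) (s1 : Set V1) (s2 : Set V2)

/-- Whether a cross pair is joined in the glued completion. -/
def mixAdj (a : V1) (b : V2) : Prop :=
  (a ∈ s1 ∧ b ∈ s2) ∨ (a ∉ s1 ∧ b ∉ s2)

/-- The glued co-bipartite completion of a disjoint union. -/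
def glue : SimpleGraph (V1 ⊕ V2) where
  Adj u v := match u, v with
    | Sum.inl a, Sum.inl b => H1.Adj a b
    | Sum.inl a, Sum.inr b => mixAdj s1 s2 a b
    | Sum.inr b, Sum.inl a => mixAdj s1 s2 a b
    | Sum.inr a, Sum.inr b => H2.Adj a b
  symm := ⟨by
    rintro (a | a) (b | b) h
    · exact h.symm
    · exact h
    · exact h
    · exact h.symm⟩
  loopless := ⟨by
    rintro (a | a) h
    · exact H1.irrefl h
    · exact H2.irrefl h⟩

lemma glue_comap_inl : (glue H1 H2 s1 s2).comap Sum.inl = H1 := by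
  ext a b; exact Iff.rfl

lemma glue_comap_inr : (glue H1 H2 s1 s2).comap Sum.inr = H2 := by
  ext a b; exact Iff.rfl

lemma glue_le {G1 : SimpleGraph V1} {G2 : SimpleGraph V2} (hG1 : G1 ≤ H1) (hG2 : G2 ≤ H2) :
    G1 ⊕g G2 ≤ glue H1 H2 s1 s2 := by
  rintro (a | a) (b | b) h
  · exact hG1 ((sum_adj_ll G1 G2 a b).mp h)
  · exact absurd h (sum_adj_lr G1 G2 a b)
  · exact absurd (h.symm) (sum_adj_lr G1 G2 b a)
  · exact hG2 ((sum_adj_rr G1 G2 a b).mp h)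

lemma glue_clique (h1 : H1.IsClique s1) (h2 : H2.IsClique s2) :
    (glue H1 H2 s1 s2).IsClique (Sum.inl '' s1 ∪ Sum.inr '' s2) := by
  rintro x (⟨a, ha, rfl⟩ | ⟨a, ha, rfl⟩) y (⟨b, hb, rfl⟩ | ⟨b, hb, rfl⟩) hxy
  · exact h1 ha hb (fun h => hxy (congrArg _ h))
  · exact Or.inl ⟨ha, hb⟩
  · exact Or.inl ⟨hb, ha⟩
  · exact h2 ha hb (fun h => hxy (congrArg _ h))

lemma compl_inl_union_inr :
    (Sum.inl '' s1 ∪ Sum.inr '' s2 : Set (V1 ⊕ V2))ᶜ = Sum.inl '' s1ᶜ ∪ Sum.inr '' s2ᶜ := by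
  ext (a | a) <;> simp

lemma glue_clique_compl (h1 : H1.IsClique s1ᶜ) (h2 : H2.IsClique s2ᶜ) :
    (glue H1 H2 s1 s2).IsClique ((Sum.inl '' s1 ∪ Sum.inr '' s2)ᶜ) := by
  rw [compl_inl_union_inr]
  rintro x (⟨a, ha, rfl⟩ | ⟨a, ha, rfl⟩) y (⟨b, hb, rfl⟩ | ⟨b, hb, rfl⟩) hxy
  · exact h1 ha hb (fun h => hxy (congrArg _ h))
  · exact Or.inr ⟨ha, hb⟩
  · exact Or.inr ⟨hb, ha⟩
  · exact h2 ha hb (fun h => hxy (congrArg _ h))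

lemma glue_crossSet :
    {p : V1 × V2 | (glue H1 H2 s1 s2).Adj (Sum.inl p.1) (Sum.inr p.2)}
      = s1 ×ˢ s2 ∪ s1ᶜ ×ˢ s2ᶜ := by
  ext ⟨a, b⟩
  constructor
  · rintro (h | h)
    · exact Or.inl h
    · exact Or.inr h
  · rintro (h | h)
    · exact Or.inl h
    · exact Or.inr h

end Glue

lemma cobip_attained {V : Type*} [Fintype V] (G : SimpleGraph V) (t : ℕ)
    (ht : t ≤ Fintype.card V) :
    ∃ (H : SimpleGraph V) (s : Set V), G ≤ H ∧ H.IsClique s ∧ H.IsClique sᶜ ∧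
      s.ncard = t ∧ (H.edgeSet \ G.edgeSet).ncard = cobipCompletionNumberWith G t := by
  have htu : t ≤ (Set.univ : Set V).ncard := by
    rwa [Set.ncard_univ, Nat.card_eq_fintype_card]
  obtain ⟨s, -, hs⟩ := Set.exists_subset_card_eq htu
  have hclique : ∀ u : Set V, (⊤ : SimpleGraph V).IsClique u := by
    intro u x _ y _ hxy
    simpa using hxy
  have hne : {m | ∃ (H : SimpleGraph V) (s' : Set V), G ≤ H ∧ H.IsClique s' ∧
      H.IsClique s'ᶜ ∧ s'.ncard = t ∧ (H.edgeSet \ G.edgeSet).ncard = m}.Nonempty :=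
    ⟨_, ⊤, s, le_top, hclique s, hclique sᶜ, hs, rfl⟩
  obtain ⟨H, s', h1, h2, h3, h4, h5⟩ := Nat.sInf_mem hne
  exact ⟨H, s', h1, h2, h3, h4, h5⟩

end CobipAux


open CobipAux

theorem cobip_completion_disjoint_union {V1 V2 : Type*} [Fintype V1] [Fintype V2]
    (G1 : SimpleGraph V1) (G2 : SimpleGraph V2) (n1 n2 : ℕ)
    (hn1 : Fintype.card V1 = n1) (hn2 : Fintype.card V2 = n2)
    (j : ℕ) (hj : j ≤ n1 + n2) :
    cobipCompletionNumberWith (G1 ⊕g G2) j =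
      sInf {m | ∃ k : ℕ, j - n2 ≤ k ∧ k ≤ min j n1 ∧
        m = cobipCompletionNumberWith G1 k + cobipCompletionNumberWith G2 (j - k) +
            k * (j - k) + (n1 - k) * (n2 - (j - k))} := by
  classical
  subst hn1
  subst hn2
  set SL := {m | ∃ (H : SimpleGraph (V1 ⊕ V2)) (s : Set (V1 ⊕ V2)), (G1 ⊕g G2) ≤ H ∧
      H.IsClique s ∧ H.IsClique sᶜ ∧ s.ncard = j ∧
      (H.edgeSet \ (G1 ⊕g G2).edgeSet).ncard = m} with hSL
  set SR := {m | ∃ k : ℕ, j - Fintype.card V2 ≤ k ∧ k ≤ min j (Fintype.card V1) ∧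
        m = cobipCompletionNumberWith G1 k + cobipCompletionNumberWith G2 (j - k) +
            k * (j - k) + (Fintype.card V1 - k) * (Fintype.card V2 - (j - k))} with hSR
  show sInf SL = sInf SR
  -- Step 1: every element of SR lies in SL
  have hsub : ∀ m ∈ SR, m ∈ SL := by
    rintro m ⟨k, hk1, hk2, rfl⟩
    have hkj : k ≤ j := le_of_le_of_eq (le_trans hk2 (min_le_left _ _)) rfl
    have hkn1 : k ≤ Fintype.card V1 := le_trans hk2 (min_le_right _ _)
    have hjkn2 : j - k ≤ Fintype.card V2 := by omega
    obtain ⟨H1, s1, hle1, hc1, hc1c, hcard1, hfill1⟩ := cobip_attained G1 k hkn1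
    obtain ⟨H2, s2, hle2, hc2, hc2c, hcard2, hfill2⟩ := cobip_attained G2 (j - k) hjkn2
    refine ⟨glue H1 H2 s1 s2, Sum.inl '' s1 ∪ Sum.inr '' s2,
      glue_le _ _ _ _ hle1 hle2, glue_clique _ _ _ _ hc1 hc2,
      glue_clique_compl _ _ _ _ hc1c hc2c, ?_, ?_⟩
    · rw [ncard_inl_union_inr, hcard1, hcard2]
      omega
    · rw [fill_decomp, glue_comap_inl, glue_comap_inr, hfill1, hfill2, glue_crossSet,
        ncard_crossSet, hcard1, hcard2, ncard_compl_eq, ncard_compl_eq, hcard1, hcard2]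
      ring
  -- Step 2: every element of SL dominates an element of SR
  have hbound : ∀ m ∈ SL, ∃ m' ∈ SR, m' ≤ m := by
    rintro m ⟨H, s, hle, hcs, hcsc, hcard, rfl⟩
    set s1 := Sum.inl ⁻¹' s with hs1
    set s2 := Sum.inr ⁻¹' s with hs2
    have hs_eq : s = Sum.inl '' s1 ∪ Sum.inr '' s2 := by
      ext (a | a) <;> simp [hs1, hs2]
    have hsum : s1.ncard + s2.ncard = j := by
      rw [← ncard_inl_union_inr, ← hs_eq, hcard]
    have hk_n1 : s1.ncard ≤ Fintype.card V1 := by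
      have := Set.ncard_le_ncard (Set.subset_univ s1) (Set.toFinite _)
      rwa [Set.ncard_univ, Nat.card_eq_fintype_card] at this
    have hk_n2 : s2.ncard ≤ Fintype.card V2 := by
      have := Set.ncard_le_ncard (Set.subset_univ s2) (Set.toFinite _)
      rwa [Set.ncard_univ, Nat.card_eq_fintype_card] at this
    set k := s1.ncard with hk
    have hs2card : s2.ncard = j - k := by omega
    have hH1le : G1 ≤ H.comap Sum.inl := by
      intro a b h
      exact hle ((sum_adj_ll G1 G2 a b).mpr h)
    have hH2le : G2 ≤ H.comap Sum.inr := by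
      intro a b h
      exact hle ((sum_adj_rr G1 G2 a b).mpr h)
    have hc1 : (H.comap Sum.inl).IsClique s1 := by
      intro a ha b hb hab
      exact hcs ha hb (fun h => hab (Sum.inl_injective h))
    have hc1c : (H.comap Sum.inl).IsClique s1ᶜ := by
      intro a ha b hb hab
      exact hcsc ha hb (fun h => hab (Sum.inl_injective h))
    have hc2 : (H.comap Sum.inr).IsClique s2 := by
      intro a ha b hb hab
      exact hcs ha hb (fun h => hab (Sum.inr_injective h))
    have hc2c : (H.comap Sum.inr).IsClique s2ᶜ := by
      intro a ha b hb hab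
      exact hcsc ha hb (fun h => hab (Sum.inr_injective h))
    have hfill1 : cobipCompletionNumberWith G1 k ≤
        ((H.comap Sum.inl).edgeSet \ G1.edgeSet).ncard :=
      Nat.sInf_le ⟨H.comap Sum.inl, s1, hH1le, hc1, hc1c, rfl, rfl⟩
    have hfill2 : cobipCompletionNumberWith G2 (j - k) ≤
        ((H.comap Sum.inr).edgeSet \ G2.edgeSet).ncard :=
      Nat.sInf_le ⟨H.comap Sum.inr, s2, hH2le, hc2, hc2c, hs2card, rfl⟩
    have hXsub : (s1 ×ˢ s2 ∪ s1ᶜ ×ˢ s2ᶜ : Set (V1 × V2)) ⊆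
        {p : V1 × V2 | H.Adj (Sum.inl p.1) (Sum.inr p.2)} := by
      rintro ⟨a, b⟩ (⟨ha, hb⟩ | ⟨ha, hb⟩)
      · exact hcs ha hb (by simp)
      · exact hcsc ha hb (by simp)
    have hX : k * (j - k) + (Fintype.card V1 - k) * (Fintype.card V2 - (j - k)) ≤
        {p : V1 × V2 | H.Adj (Sum.inl p.1) (Sum.inr p.2)}.ncard := by
      have h := Set.ncard_le_ncard hXsub (Set.toFinite _)
      rwa [ncard_crossSet, hs2card, ncard_compl_eq, ncard_compl_eq, hs2card] at h
    refine ⟨_, ⟨k, by omega, le_min (by omega) hk_n1, rfl⟩, ?_⟩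
    rw [fill_decomp]
    set A := k * (j - k) with hA
    set B := (Fintype.card V1 - k) * (Fintype.card V2 - (j - k)) with hB
    omega
  -- Step 3: conclude
  have hSRne : SR.Nonempty := ⟨_, min j (Fintype.card V1), by omega, le_refl _, rfl⟩
  have h1 : sInf SL ≤ sInf SR := Nat.sInf_le (hsub _ (Nat.sInf_mem hSRne))
  have hSLne : SL.Nonempty := ⟨_, hsub _ (Nat.sInf_mem hSRne)⟩
  obtain ⟨m', hm', hle'⟩ := hbound _ (Nat.sInf_mem hSLne)
  exact le_antisymm h1 (le_trans (Nat.sInf_le hm') hle')
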